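/- Success of a transition conditions correctly: for a condition/event net with uncertainty with transition t (with disjoint precondition •t and postcondition t•), mass function p with P({m' : m' enables t}) > 0, the distribution success_t(p) := set_{t•,1}(set_{•t,0}(ass_{t•,0}(ass_{•t,1}(p)))) satisfies success_t(p)(m) = P({m' : m' ⇒^t m} | {m' : m' enables t}) for every marking m. -/

import Mathlib

open Finset

/-- The assert operation. -/
noncomputable def ass {S : Type*} [Fintype S] [DecidableEq S]
    (A : Finset S) (b : Bool) (p : (S → Bool) → ℝ) : (S → Bool) → ℝ :=
  fun m => if ∀ s ∈ A, m s = b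
    then p m / ∑ m' ∈ univ.filter (fun m' : S → Bool => ∀ s ∈ A, m' s = b), p m'
    else 0

/-- The set operation. -/
noncomputable def setOp {S : Type*} [Fintype S] [DecidableEq S]
    (A : Finset S) (b : Bool) (p : (S → Bool) → ℝ) : (S → Bool) → ℝ :=
  fun m => if ∀ s ∈ A, m s = b
    then ∑ m' ∈ univ.filter (fun m' : S → Bool => ∀ s, s ∉ A → m' s = m s), p m'
    else 0

/-- `m` enables a transition with precondition `pre` and postcondition `post`. -/
def enables {S : Type*} (pre post : Finset S) (m : S → Bool) : Prop :=
  (∀ s ∈ pre, m s = true) ∧ (∀ s ∈ post, m s = false)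

instance {S : Type*} (pre post : Finset S) (m : S → Bool) :
    Decidable (enables pre post m) := by
  unfold enables; infer_instance

/-- The marking obtained by firing the transition from `m`. -/
def fire {S : Type*} [DecidableEq S] (pre post : Finset S) (m : S → Bool) : S → Bool :=
  fun s => if s ∈ post then true else if s ∈ pre then false else m s

/-- Success of a transition conditions correctly: `success_t(p)(m)` is the conditional
probability of `{m' : m' ⇒ᵗ m}` given that `t` is enabled. -/
theorem stmt_4 {S : Type*} [Fintype S] [DecidableEq S]
    (pre post : Finset S) (hdisj : Disjoint pre post)
    (p : (S → Bool) → ℝ)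
    (hp0 : ∀ m, 0 ≤ p m) (hp1 : ∑ m, p m = 1)
    (hpos : 0 < ∑ m' ∈ univ.filter (fun m' : S → Bool => enables pre post m'), p m')
    (m : S → Bool) :
    setOp post true (setOp pre false (ass post false (ass pre true p))) m =
      (∑ m' ∈ univ.filter
          (fun m' : S → Bool => enables pre post m' ∧ fire pre post m' = m), p m') /
        ∑ m' ∈ univ.filter (fun m' : S → Bool => enables pre post m'), p m' := by
  classical
  have hsub : univ.filter (fun m' : S → Bool => enables pre post m') ⊆
      univ.filter (fun m' : S → Bool => ∀ s ∈ pre, m' s = true) := by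
    intro x hx
    simp only [mem_filter, mem_univ, true_and] at hx ⊢
    exact hx.1
  have hZ1pos : 0 < ∑ m' ∈ univ.filter (fun m' : S → Bool => ∀ s ∈ pre, m' s = true), p m' :=
    lt_of_lt_of_le hpos (sum_le_sum_of_subset_of_nonneg hsub (fun i _ _ => hp0 i))
  set Z := ∑ m' ∈ univ.filter (fun m' : S → Bool => enables pre post m'), p m' with hZdef
  set Z1 := ∑ m' ∈ univ.filter (fun m' : S → Bool => ∀ s ∈ pre, m' s = true), p m' with hZ1def
  have hZne : Z ≠ 0 := ne_of_gt hpos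
  have hZ1ne : Z1 ≠ 0 := ne_of_gt hZ1pos
  -- Step 1: the two `ass` operations give the conditional distribution on enabling markings
  have hD : (∑ m' ∈ univ.filter (fun m' : S → Bool => ∀ s ∈ post, m' s = false),
      ass pre true p m') = Z / Z1 := by
    unfold ass
    rw [← hZ1def]
    rw [← Finset.sum_filter, Finset.filter_filter]
    rw [← Finset.sum_div]
    congr 2
    ext x
    simp only [mem_filter, mem_univ, true_and]; simp only [enables]
    tauto
  have hq2 : ass post false (ass pre true p) =
      fun x => if enables pre post x then p x / Z else 0 := by
    funext x
    unfold ass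
    rw [← hZ1def]
    conv_lhs => rw [show (∑ m' ∈ univ.filter (fun m' : S → Bool => ∀ s ∈ post, m' s = false),
      (if ∀ s ∈ pre, m' s = true then p m' / Z1 else 0)) = Z / Z1 by
        rw [← hD]; unfold ass; rw [← hZ1def]]
    by_cases h2 : ∀ s ∈ post, x s = false
    · rw [if_pos h2]
      by_cases h1 : ∀ s ∈ pre, x s = true
      · rw [if_pos h1, if_pos ⟨h1, h2⟩]
        field_simp
      · rw [if_neg h1, if_neg (fun h => h1 h.1), zero_div]
    · rw [if_neg h2, if_neg (fun h => h2 h.2)]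
  rw [hq2]
  unfold setOp
  -- the unique preimage marking
  set u : S → Bool := fun s => if s ∈ pre then true else if s ∈ post then false else m s with hu
  by_cases hpost : ∀ s ∈ post, m s = true
  · by_cases hpre : ∀ s ∈ pre, m s = false
    · -- main case
      rw [if_pos hpost]
      have key : ∀ m'' : S → Bool,
          (∑ m' ∈ univ.filter (fun m' : S → Bool => ∀ s, s ∉ pre → m' s = m'' s),
            (if enables pre post m' then p m' / Z else 0))
          = if ∀ s ∈ post, m'' s = false
              then p (fun s => if s ∈ pre then true else m'' s) / Z else 0 := by
        intro m''
        by_cases h2 : ∀ s ∈ post, m'' s = false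
        · rw [if_pos h2]
          set a : S → Bool := fun s => if s ∈ pre then true else m'' s with ha
          have hamem : a ∈ univ.filter (fun m' : S → Bool => ∀ s, s ∉ pre → m' s = m'' s) := by
            simp only [mem_filter, mem_univ, true_and]
            intro s hs
            simp [ha, hs]
          have hena : enables pre post a := by
            constructor
            · intro s hs; simp [ha, hs]
            · intro s hs
              have hsn : s ∉ pre := fun h => (Finset.disjoint_left.mp hdisj h) hs
              simp [ha, hsn, h2 s hs]
          rw [Finset.sum_eq_single_of_mem a hamem ?_, if_pos hena]
          intro b hb hne
          rw [if_neg]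
          intro henb
          apply hne
          funext s
          by_cases hs : s ∈ pre
          · rw [henb.1 s hs]; simp [ha, hs]
          · simp only [mem_filter, mem_univ, true_and] at hb
            rw [hb s hs]; simp [ha, hs]
        · rw [if_neg h2]
          apply Finset.sum_eq_zero
          intro b hb
          rw [if_neg]
          intro henb
          apply h2
          intro s hs
          have hsn : s ∉ pre := fun h => (Finset.disjoint_left.mp hdisj h) hs
          simp only [mem_filter, mem_univ, true_and] at hb
          rw [← hb s hsn]
          exact henb.2 s hs
      have step : ∀ m'' ∈ univ.filter (fun m' : S → Bool => ∀ s, s ∉ post → m' s = m s),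
          (if ∀ s ∈ pre, m'' s = false
            then ∑ m' ∈ univ.filter (fun m' : S → Bool => ∀ s, s ∉ pre → m' s = m'' s),
              (if enables pre post m' then p m' / Z else 0) else 0)
          = if ∀ s ∈ post, m'' s = false
              then p (fun s => if s ∈ pre then true else m'' s) / Z else 0 := by
        intro m'' hm''
        simp only [mem_filter, mem_univ, true_and] at hm''
        have hpf : ∀ s ∈ pre, m'' s = false := by
          intro s hs
          have hsn : s ∉ post := fun h => (Finset.disjoint_right.mp hdisj h) hs
          rw [hm'' s hsn]; exact hpre s hs
        rw [if_pos hpf, key]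
      rw [Finset.sum_congr rfl step]
      set b0 : S → Bool := fun s => if s ∈ post then false else m s with hb0
      have hb0mem : b0 ∈ univ.filter (fun m' : S → Bool => ∀ s, s ∉ post → m' s = m s) := by
        simp only [mem_filter, mem_univ, true_and]
        intro s hs; simp [hb0, hs]
      have hb0c : ∀ s ∈ post, b0 s = false := by intro s hs; simp [hb0, hs]
      rw [Finset.sum_eq_single_of_mem b0 hb0mem ?_, if_pos hb0c]
      · -- LHS is now p (fun s => if s ∈ pre then true else b0 s) / Z
        have huu : (fun s => if s ∈ pre then true else b0 s) = u := by
          funext s; by_cases hs : s ∈ pre <;> simp [hb0, hu, hs]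
        rw [huu]
        -- RHS: the filter set is {u}
        have hset : univ.filter
            (fun m' : S → Bool => enables pre post m' ∧ fire pre post m' = m) = {u} := by
          ext b
          simp only [mem_filter, mem_univ, true_and, mem_singleton]
          constructor
          · rintro ⟨henb, hfb⟩
            funext s
            by_cases hs1 : s ∈ pre
            · rw [henb.1 s hs1]; simp [hu, hs1]
            · by_cases hs2 : s ∈ post
              · rw [henb.2 s hs2]; simp [hu, hs1, hs2]
              · have : fire pre post b s = m s := by rw [hfb]
                unfold fire at this
                simp only [hs1, hs2, if_false] at this
                rw [this]; simp [hu, hs1, hs2]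
          · rintro rfl
            refine ⟨⟨fun s hs => by simp [hu, hs], fun s hs => ?_⟩, ?_⟩
            · have hsn : s ∉ pre := fun h => (Finset.disjoint_left.mp hdisj h) hs
              simp [hu, hsn, hs]
            · funext s
              unfold fire
              by_cases hs2 : s ∈ post
              · simp [hs2, hpost s hs2]
              · by_cases hs1 : s ∈ pre
                · simp [hs1, hs2, (hpre s hs1).symm]
                · simp [hs1, hs2, hu]
        rw [hset, Finset.sum_singleton]
      · intro b hb hne
        rw [if_neg]
        intro hbc
        apply hne
        funext s
        by_cases hs : s ∈ post
        · rw [hbc s hs]; simp [hb0, hs]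
        · simp only [mem_filter, mem_univ, true_and] at hb
          rw [hb s hs]; simp [hb0, hs]
    · -- precondition not all false in m : both sides vanish
      have hnum : univ.filter
          (fun m' : S → Bool => enables pre post m' ∧ fire pre post m' = m) = ∅ := by
        rw [Finset.filter_eq_empty_iff]
        rintro b _ ⟨henb, hfb⟩
        apply hpre
        intro s hs
        have hsn : s ∉ post := fun h => (Finset.disjoint_right.mp hdisj h) hs
        have : fire pre post b s = m s := by rw [hfb]
        unfold fire at this
        simp only [hsn, hs, if_false, if_true] at this
        exact this.symm
      rw [hnum, Finset.sum_empty, zero_div, if_pos hpost]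
      apply Finset.sum_eq_zero
      intro b hb
      rw [if_neg]
      intro hbc
      apply hpre
      intro s hs
      have hsn : s ∉ post := fun h => (Finset.disjoint_right.mp hdisj h) hs
      simp only [mem_filter, mem_univ, true_and] at hb
      rw [← hb s hsn]
      exact hbc s hs
  · -- postcondition not all true in m : both sides vanish
    have hnum : univ.filter
        (fun m' : S → Bool => enables pre post m' ∧ fire pre post m' = m) = ∅ := by
      rw [Finset.filter_eq_empty_iff]
      rintro b _ ⟨henb, hfb⟩
      apply hpost
      intro s hs
      have : fire pre post b s = m s := by rw [hfb]
      unfold fire at this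
      simp only [hs, if_true] at this
      exact this.symm
    rw [hnum, Finset.sum_empty, zero_div, if_neg hpost]
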